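/- Let n be a positive natural number, K_C and K_E invertible n×n real matrices, ρ ∈ ℝ, and k_C, k_E ∈ ℝⁿ. Set the 2n×2n block matrix M = [[K_C, ρK_C], [ρK_C, ρ²K_C + K_E]] and the 2n-vector k̃ = (ρk_C, ρ²k_C + k_E). Then k̃ᵀ M⁻¹ k̃ = ρ² · k_Cᵀ K_C⁻¹ k_C + k_Eᵀ K_E⁻¹ k_E. Consequently, for any real numbers c_C and c_E, the quantity ρ²c_C + c_E − k̃ᵀ M⁻¹ k̃ equals ρ²(c_C − k_Cᵀ K_C⁻¹ k_C) + (c_E − k_Eᵀ K_E⁻¹ k_E); that is, the joint multi-fidelity predictive variance decomposes as s²_{n,E}(x) = ρ² s²_{n,C}(x) + s²_{n,d}(x). -/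
import Mathlib


open Matrix

theorem mufi_predictive_variance_equal_designs
    (n : ℕ) (hn : 0 < n)
    (K_C K_E : Matrix (Fin n) (Fin n) ℝ)
    (hC : IsUnit K_C.det) (hE : IsUnit K_E.det)
    (ρ : ℝ) (k_C k_E : Fin n → ℝ) :
    let M : Matrix (Fin n ⊕ Fin n) (Fin n ⊕ Fin n) ℝ :=
      Matrix.fromBlocks K_C (ρ • K_C) (ρ • K_C) (ρ ^ 2 • K_C + K_E)
    let k : Fin n ⊕ Fin n → ℝ := Sum.elim (ρ • k_C) (ρ ^ 2 • k_C + k_E)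
    k ⬝ᵥ (M⁻¹ *ᵥ k) =
      ρ ^ 2 * (k_C ⬝ᵥ (K_C⁻¹ *ᵥ k_C)) + k_E ⬝ᵥ (K_E⁻¹ *ᵥ k_E) ∧
    ∀ c_C c_E : ℝ,
      ρ ^ 2 * c_C + c_E - k ⬝ᵥ (M⁻¹ *ᵥ k) =
        ρ ^ 2 * (c_C - k_C ⬝ᵥ (K_C⁻¹ *ᵥ k_C)) + (c_E - k_E ⬝ᵥ (K_E⁻¹ *ᵥ k_E)) := by
  intro M k
  set N : Matrix (Fin n ⊕ Fin n) (Fin n ⊕ Fin n) ℝ :=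
    Matrix.fromBlocks (K_C⁻¹ + ρ ^ 2 • K_E⁻¹) ((-ρ) • K_E⁻¹) ((-ρ) • K_E⁻¹) K_E⁻¹ with hN
  have hCC : K_C * K_C⁻¹ = 1 := Matrix.mul_nonsing_inv _ hC
  have hEE : K_E * K_E⁻¹ = 1 := Matrix.mul_nonsing_inv _ hE
  have hMN : M * N = 1 := by
    show Matrix.fromBlocks K_C (ρ • K_C) (ρ • K_C) (ρ ^ 2 • K_C + K_E) * N = 1
    rw [hN, Matrix.fromBlocks_multiply, ← Matrix.fromBlocks_one, Matrix.fromBlocks_inj]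
    refine ⟨?_, ?_, ?_, ?_⟩ <;>
      simp only [Matrix.smul_mul, Matrix.mul_smul, Matrix.mul_add, Matrix.add_mul,
        hCC, hEE, smul_smul] <;>
      module
  have hMinv : M⁻¹ = N := Matrix.inv_eq_right_inv hMN
  have hvec : N *ᵥ k =
      Sum.elim (ρ • (K_C⁻¹ *ᵥ k_C) + (-ρ) • (K_E⁻¹ *ᵥ k_E)) (K_E⁻¹ *ᵥ k_E) := by
    rw [hN]
    show Matrix.fromBlocks _ _ _ _ *ᵥ Sum.elim (ρ • k_C) (ρ ^ 2 • k_C + k_E) = _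
    rw [Matrix.fromBlocks_mulVec]
    simp only [Sum.elim_comp_inl, Sum.elim_comp_inr]
    refine congrArg₂ Sum.elim ?_ ?_ <;>
      simp only [Matrix.mulVec_add, Matrix.mulVec_smul, Matrix.smul_mulVec,
        Matrix.add_mulVec, smul_smul] <;>
      module
  have key : k ⬝ᵥ (M⁻¹ *ᵥ k) =
      ρ ^ 2 * (k_C ⬝ᵥ (K_C⁻¹ *ᵥ k_C)) + k_E ⬝ᵥ (K_E⁻¹ *ᵥ k_E) := by
    rw [hMinv, hvec]
    show Sum.elim (ρ • k_C) (ρ ^ 2 • k_C + k_E) ⬝ᵥ _ = _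
    rw [sumElim_dotProduct_sumElim]
    simp [dotProduct_add, add_dotProduct, smul_dotProduct,
      dotProduct_smul, smul_eq_mul]
    ring
  exact ⟨key, fun c_C c_E => by rw [key]; ring⟩
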